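/- Let d ≥ 1 be an integer, g > 0, and κ_0, κ_1, …, κ_d real numbers satisfying the continuity relation ∑_{m=0}^{d−1} κ_m g^{d−m} = −κ_d. Then the function R(s) = ∑_{m=0}^d κ_m g^{s−m}/(s−m) can be written as R(s) = g^{s−d} P(s)/Q(s) with Q(s) = s(s−1)⋯(s−d) and P a polynomial of degree at most d−1; consequently, for any σ_1, σ_2 with d−1 < σ_1 < σ_2 < d there exists K > 0 such that |∑_{m=0}^d κ_m g^{s−m}/(s−m)| ≤ K/|s|² for all complex s with σ_1 ≤ Re(s) ≤ σ_2. -/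

import Mathlib

open Polynomial Finset

private theorem stmt_13_part1
    (d : ℕ) (hd : 1 ≤ d)
    (g : ℝ) (hg : 0 < g)
    (κ : ℕ → ℝ)
    (hcont : ∑ m ∈ Finset.range d, κ m * g ^ ((d : ℝ) - m) = -κ d) :
    (∃ P : Polynomial ℂ, P.degree ≤ (d - 1 : ℕ) ∧
      ∀ s : ℂ, (∀ m : ℕ, m ≤ d → s ≠ (m : ℂ)) →
        (∑ m ∈ Finset.range (d + 1), (κ m : ℂ) * (g : ℂ) ^ (s - (m : ℂ)) / (s - (m : ℂ)))
          = (g : ℂ) ^ (s - (d : ℂ)) * P.eval s / ∏ m ∈ Finset.range (d + 1), (s - (m : ℂ))) := by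
  have hgC : (g:ℂ) ≠ 0 := by
    simp only [ne_eq, Complex.ofReal_eq_zero]; exact hg.ne'
  set c : ℕ → ℂ := fun m => (κ m : ℂ) * (g:ℂ) ^ ((d:ℂ) - (m:ℂ)) with hc
  set P : ℂ[X] := ∑ m ∈ range (d+1), C (c m) * ∏ j ∈ (range (d+1)).erase m,
    (X - C (j:ℂ)) with hPdef
  have hmonic : ∀ m ∈ range (d+1), (∏ j ∈ (range (d+1)).erase m, (X - C (j:ℂ))).Monic :=
    fun m _ => monic_prod_of_monic _ _ (fun j _ => monic_X_sub_C _)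
  have hndeg : ∀ m ∈ range (d+1), (∏ j ∈ (range (d+1)).erase m, (X - C (j:ℂ))).natDegree = d := by
    intro m hm
    rw [natDegree_prod]
    · simp only [natDegree_X_sub_C, Finset.sum_const, smul_eq_mul, mul_one,
        Finset.card_erase_of_mem hm]
      simp
    · intro j _; exact X_sub_C_ne_zero _
  -- sum of c over range (d+1) is 0
  have hterm : ∀ m : ℕ, c m = ((κ m * g ^ ((d:ℝ) - m) : ℝ) : ℂ) := by
    intro m
    rw [hc]
    push_cast [Complex.ofReal_cpow hg.le]
    ring
  have hsum : ∑ m ∈ range (d+1), c m = 0 := by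
    have hreal : ∑ m ∈ range (d+1), κ m * g ^ ((d:ℝ) - m) = 0 := by
      rw [Finset.sum_range_succ, hcont, sub_self, Real.rpow_zero, mul_one]
      ring
    calc ∑ m ∈ range (d+1), c m
        = ((∑ m ∈ range (d+1), κ m * g ^ ((d:ℝ) - m) : ℝ) : ℂ) := by
          rw [Complex.ofReal_sum]; exact Finset.sum_congr rfl (fun m _ => hterm m)
      _ = 0 := by rw [hreal]; simp
  have hPcoeff : ∀ n, d ≤ n → P.coeff n = 0 := by
    intro n hn
    rw [hPdef, finset_sum_coeff]
    rcases eq_or_lt_of_le hn with h | h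
    · have : ∀ m ∈ range (d+1), (C (c m) * ∏ j ∈ (range (d+1)).erase m, (X - C (j:ℂ))).coeff n
          = c m := by
        intro m hm
        have h1 := Monic.coeff_natDegree (hmonic m hm)
        rw [hndeg m hm] at h1
        rw [coeff_C_mul, ← h, h1, mul_one]
      rw [Finset.sum_congr rfl this, hsum]
    · refine Finset.sum_eq_zero (fun m hm => ?_)
      rw [coeff_C_mul, coeff_eq_zero_of_natDegree_lt (by rw [hndeg m hm]; exact h), mul_zero]
  have hPdeg : P.degree ≤ (d - 1 : ℕ) := by
    rw [degree_le_iff_coeff_zero]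
    intro n hn
    refine hPcoeff n ?_
    have : (d - 1 : ℕ) < n := by exact_mod_cast hn
    omega
  refine ⟨P, hPdeg, ?_⟩
  intro s hs
  have hne : ∀ m ∈ range (d+1), s - (m:ℂ) ≠ 0 := by
    intro m hm
    rw [sub_ne_zero]
    exact hs m (by simpa using Nat.lt_succ_iff.mp (Finset.mem_range.mp hm))
  have hQ : (∏ m ∈ range (d+1), (s - (m:ℂ))) ≠ 0 := Finset.prod_ne_zero_iff.mpr hne
  have hPeval : P.eval s = ∑ m ∈ range (d+1), c m * ∏ j ∈ (range (d+1)).erase m, (s - (j:ℂ)) := by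
    rw [hPdef, eval_finset_sum]
    exact Finset.sum_congr rfl (fun m _ => by rw [eval_mul, eval_C, eval_prod]; simp)
  rw [hPeval, Finset.mul_sum, Finset.sum_div]
  refine Finset.sum_congr rfl (fun m hm => ?_)
  have hE : (∏ j ∈ (range (d+1)).erase m, (s - (j:ℂ))) ≠ 0 :=
    Finset.prod_ne_zero_iff.mpr (fun j hj => hne j (Finset.mem_of_mem_erase hj))
  rw [← Finset.mul_prod_erase _ _ hm]
  have hrw : (g:ℂ) ^ (s - (d:ℂ)) * (c m * ∏ j ∈ (range (d+1)).erase m, (s - (j:ℂ)))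
      = ((g:ℂ) ^ (s - (d:ℂ)) * c m) * ∏ j ∈ (range (d+1)).erase m, (s - (j:ℂ)) := by ring
  rw [hrw, mul_div_mul_right _ _ hE]
  congr 1
  have hpow : (g:ℂ) ^ (s - (d:ℂ)) * (g:ℂ) ^ ((d:ℂ) - (m:ℂ)) = (g:ℂ) ^ (s - (m:ℂ)) := by
    rw [← Complex.cpow_add _ _ hgC]; ring_nf
  have hcm : c m = (κ m : ℂ) * (g:ℂ) ^ ((d:ℂ) - (m:ℂ)) := rfl
  rw [hcm, ← hpow]; ring


private theorem stmt_13_part2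
    (d : ℕ) (hd : 1 ≤ d)
    (g : ℝ) (hg : 0 < g)
    (κ : ℕ → ℝ)
    (P : Polynomial ℂ) (hPdeg : P.degree ≤ (d - 1 : ℕ))
    (hid : ∀ s : ℂ, (∀ m : ℕ, m ≤ d → s ≠ (m : ℂ)) →
        (∑ m ∈ Finset.range (d + 1), (κ m : ℂ) * (g : ℂ) ^ (s - (m : ℂ)) / (s - (m : ℂ)))
          = (g : ℂ) ^ (s - (d : ℂ)) * P.eval s / ∏ m ∈ Finset.range (d + 1), (s - (m : ℂ))) :
    ∀ σ₁ σ₂ : ℝ, (d : ℝ) - 1 < σ₁ → σ₁ < σ₂ → σ₂ < d →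
      ∃ K : ℝ, 0 < K ∧ ∀ s : ℂ, σ₁ ≤ s.re → s.re ≤ σ₂ →
        norm (∑ m ∈ Finset.range (d + 1),
            (κ m : ℂ) * (g : ℂ) ^ (s - (m : ℂ)) / (s - (m : ℂ)))
          ≤ K / norm s ^ 2 := by
  obtain ⟨e, rfl⟩ : ∃ e, d = e + 1 := ⟨d - 1, by omega⟩
  intro σ₁ σ₂ h1 h12 h2
  have hσ1 : 0 < σ₁ := by
    have : (0:ℝ) ≤ (e+1:ℕ) - 1 := by push_cast; linarith
    linarith
  set δ : ℝ := min (σ₁ - ((e+1:ℕ) - 1)) ((e+1:ℕ) - σ₂) with hδdef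
  have h1' : ((e+1:ℕ):ℝ) - 1 < σ₁ := h1
  have h2' : σ₂ < ((e+1:ℕ):ℝ) := h2
  have hδ : 0 < δ := by
    push_cast at h1' h2'
    apply lt_min <;> push_cast <;> linarith
  set cc : ℝ := δ / (δ + (e+1:ℕ)) with hccdef
  have hcc : 0 < cc := by positivity
  set C1 : ℝ := max (g ^ (σ₁ - (e+1:ℕ))) (g ^ (σ₂ - (e+1:ℕ))) with hC1def
  have hC1 : 0 < C1 := lt_max_of_lt_left (Real.rpow_pos_of_pos hg _)
  set B : ℝ := ∑ i ∈ Finset.range (e+1), norm (P.coeff i) / σ₁ ^ (e - i) with hBdef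
  have hB : 0 ≤ B := Finset.sum_nonneg (fun i _ => by positivity)
  refine ⟨C1 * (B + 1) / cc ^ (e + 2), by positivity, ?_⟩
  intro s hre1 hre2
  set a : ℝ := norm s with hadef
  have ha : σ₁ ≤ a := le_trans hre1 (le_trans (le_abs_self _) (Complex.abs_re_le_norm s))
  have ha0 : 0 < a := lt_of_lt_of_le hσ1 ha
  -- s avoids the poles
  have hsne : ∀ m : ℕ, m ≤ e + 1 → s ≠ (m : ℂ) := by
    intro m hm hcon
    have hre : s.re = (m : ℝ) := by rw [hcon]; simp
    rcases Nat.lt_or_ge m (e+1) with h | h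
    · have : (m : ℝ) ≤ (e+1:ℕ) - 1 := by push_cast; exact_mod_cast by push_cast; linarith [Nat.lt_succ_iff.mp h]
      linarith [hre1, hre ▸ this]
    · have hme : m = e + 1 := le_antisymm hm h
      rw [hme] at hre
      have : ((e+1:ℕ):ℝ) ≤ σ₂ := by rw [← hre]; exact hre2
      linarith
  rw [hid s hsne]
  rw [norm_div, norm_mul]
  -- bound on |g^(s-d)|
  have habs_pow : norm ((g:ℂ) ^ (s - ((e+1:ℕ) : ℂ))) ≤ C1 := by
    rw [Complex.norm_cpow_eq_rpow_re_of_pos hg]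
    have hre : (s - ((e+1:ℕ):ℂ)).re = s.re - ((e+1:ℕ):ℝ) := by simp
    rw [hre]
    rcases le_or_gt 1 g with hg1 | hg1
    · exact le_trans (Real.rpow_le_rpow_of_exponent_le hg1 (by linarith)) (le_max_right _ _)
    · exact le_trans (Real.rpow_le_rpow_of_exponent_ge hg hg1.le (by linarith)) (le_max_left _ _)
  -- lower bound on each |s - m|
  have hfac : ∀ m ∈ Finset.range (e+2), cc * a ≤ norm (s - (m:ℂ)) := by
    intro m hm
    have hm' : m ≤ e + 1 := Nat.lt_succ_iff.mp (Finset.mem_range.mp hm)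
    have hreabs : |s.re - (m:ℝ)| ≤ norm (s - (m:ℂ)) := by
      have : (s - (m:ℂ)).re = s.re - (m:ℝ) := by simp
      rw [← this]; exact Complex.abs_re_le_norm _
    have hδle : δ ≤ norm (s - (m:ℂ)) := by
      rcases Nat.lt_or_ge m (e+1) with h | h
      · have hmr : (m:ℝ) ≤ (e+1:ℕ) - 1 := by
          push_cast
          have : (m:ℝ) ≤ e := by exact_mod_cast Nat.lt_succ_iff.mp h
          linarith
        refine le_trans ?_ (le_trans (le_abs_self _) hreabs)
        have := min_le_left (σ₁ - ((e+1:ℕ) - 1)) ((e+1:ℕ) - σ₂)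
        linarith
      · have hme : m = e + 1 := le_antisymm hm' h
        subst hme
        have h3 : ((e+1:ℕ):ℝ) - s.re ≤ |s.re - ((e+1:ℕ):ℝ)| := by
          rw [abs_sub_comm]; exact le_abs_self _
        have h4 := min_le_right (σ₁ - (((e+1:ℕ):ℝ) - 1)) (((e+1:ℕ):ℝ) - σ₂)
        refine le_trans ?_ (le_trans h3 hreabs)
        linarith
    have htri : a ≤ norm (s - (m:ℂ)) + ((e+1:ℕ):ℝ) := by
      have h1 : a ≤ norm (s - (m:ℂ)) + norm ((m:ℂ)) := by
        calc a = norm ((s - (m:ℂ)) + (m:ℂ)) := by rw [hadef]; ring_nf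
          _ ≤ _ := norm_add_le _ _
      have h2 : norm ((m:ℂ)) ≤ ((e+1:ℕ):ℝ) := by
        rw [Complex.norm_natCast]
        exact_mod_cast hm'
      linarith
    rw [hccdef, div_mul_eq_mul_div, div_le_iff₀ (by positivity)]
    nlinarith [hδle, htri, hδ.le]
  -- lower bound on |Q|
  have hQlow : (cc * a) ^ (e + 2) ≤ norm (∏ m ∈ Finset.range (e+1+1), (s - (m:ℂ))) := by
    rw [norm_prod]
    calc (cc * a) ^ (e+2) = ∏ _m ∈ Finset.range (e+2), (cc * a) := by
          rw [Finset.prod_const, Finset.card_range]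
      _ ≤ _ := Finset.prod_le_prod (fun i _ => by positivity) hfac
  -- upper bound on |P.eval s|
  have hPnd : P.natDegree < e + 1 := by
    have := Polynomial.natDegree_le_iff_degree_le.mpr hPdeg
    omega
  have hPev : norm (P.eval s) ≤ B * a ^ e := by
    rw [Polynomial.eval_eq_sum_range' hPnd]
    refine le_trans (norm_sum_le _ _) ?_
    rw [hBdef, Finset.sum_mul]
    refine Finset.sum_le_sum (fun i hi => ?_)
    rw [norm_mul, norm_pow]
    have hie : i ≤ e := Nat.lt_succ_iff.mp (Finset.mem_range.mp hi)
    have key : a ^ i * σ₁ ^ (e - i) ≤ a ^ e := by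
      calc a ^ i * σ₁ ^ (e - i) ≤ a ^ i * a ^ (e - i) := by
            have := pow_le_pow_left₀ hσ1.le ha (e - i)
            have h0 : (0:ℝ) ≤ a ^ i := by positivity
            nlinarith [pow_le_pow_left₀ hσ1.le ha (e-i), pow_nonneg hσ1.le (e-i)]
        _ = a ^ e := by rw [← pow_add]; congr 1; omega
    rw [div_mul_eq_mul_div, le_div_iff₀ (by positivity)]
    calc norm (P.coeff i) * a ^ i * σ₁ ^ (e-i)
        = norm (P.coeff i) * (a ^ i * σ₁ ^ (e-i)) := by ring
      _ ≤ norm (P.coeff i) * a ^ e := by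
          exact mul_le_mul_of_nonneg_left key (by positivity)
      _ = norm (P.coeff i) * a ^ e := rfl
  -- assemble
  have hQ0 : (0:ℝ) < (cc * a) ^ (e + 2) := by positivity
  have step1 : norm ((g:ℂ) ^ (s - ((e+1:ℕ):ℂ))) * norm (P.eval s) /
      norm (∏ m ∈ Finset.range (e+1+1), (s - (m:ℂ)))
      ≤ C1 * (B * a ^ e) / (cc * a) ^ (e+2) := by
    have hnum : norm ((g:ℂ) ^ (s - ((e+1:ℕ):ℂ))) * norm (P.eval s)
        ≤ C1 * (B * a ^ e) := by
      exact mul_le_mul habs_pow hPev (by positivity) hC1.le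
    calc norm ((g:ℂ) ^ (s - ((e+1:ℕ):ℂ))) * norm (P.eval s) /
        norm (∏ m ∈ Finset.range (e+1+1), (s - (m:ℂ)))
        ≤ norm ((g:ℂ) ^ (s - ((e+1:ℕ):ℂ))) * norm (P.eval s) / (cc * a) ^ (e+2) := by
          apply div_le_div_of_nonneg_left (by positivity) hQ0 hQlow
      _ ≤ _ := by apply div_le_div_of_nonneg_right hnum hQ0.le
  refine le_trans ?_ (le_trans step1 ?_)
  · apply le_of_eq
    push_cast
    rfl
  · have hEq : C1 * (B * a ^ e) / (cc * a) ^ (e+2) = (C1 * B / cc ^ (e+2)) / a ^ 2 := by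
      rw [mul_pow]
      field_simp
      ring
    rw [hEq]
    apply div_le_div_of_nonneg_right _ (by positivity)
    apply div_le_div_of_nonneg_right _ (by positivity)
    nlinarith [hC1.le, hB]


/-- under the continuity relation `∑_{m<d} κₘ g^{d-m} = -κ_d`, the
function `R(s) = ∑_{m=0}^d κₘ g^{s-m}/(s-m)` equals `g^{s-d} P(s)/Q(s)` with
`Q(s) = s(s-1)⋯(s-d)` and `deg P ≤ d - 1`; consequently on every closed vertical
strip `d-1 < σ₁ ≤ Re(s) ≤ σ₂ < d` one has `|R(s)| ≤ K/|s|²` for some `K > 0`. -/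
theorem stmt_13
    (d : ℕ) (hd : 1 ≤ d)
    (g : ℝ) (hg : 0 < g)
    (κ : ℕ → ℝ)
    (hcont : ∑ m ∈ Finset.range d, κ m * g ^ ((d : ℝ) - m) = -κ d) :
    (∃ P : Polynomial ℂ, P.degree ≤ (d - 1 : ℕ) ∧
      ∀ s : ℂ, (∀ m : ℕ, m ≤ d → s ≠ (m : ℂ)) →
        (∑ m ∈ Finset.range (d + 1), (κ m : ℂ) * (g : ℂ) ^ (s - (m : ℂ)) / (s - (m : ℂ)))
          = (g : ℂ) ^ (s - (d : ℂ)) * P.eval s / ∏ m ∈ Finset.range (d + 1), (s - (m : ℂ))) ∧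
    ∀ σ₁ σ₂ : ℝ, (d : ℝ) - 1 < σ₁ → σ₁ < σ₂ → σ₂ < d →
      ∃ K : ℝ, 0 < K ∧ ∀ s : ℂ, σ₁ ≤ s.re → s.re ≤ σ₂ →
        ‖∑ m ∈ Finset.range (d + 1),
            (κ m : ℂ) * (g : ℂ) ^ (s - (m : ℂ)) / (s - (m : ℂ))‖
          ≤ K / ‖s‖ ^ 2 := by
  obtain ⟨P, hPdeg, hid⟩ := stmt_13_part1 d hd g hg κ hcont
  exact ⟨⟨P, hPdeg, hid⟩, stmt_13_part2 d hd g hg κ P hPdeg hid⟩
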